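/- Consider the generalized scheme G(f_{k+ℓ},…,f_{k−s}) = f_k − Σ_{j=k−s}^{k−1} (f_{j+1}−f_j)^(m+1)·P(D ≥ k−j) + Σ_{j=k}^{k+ℓ−1} (f_{j+1}−f_j)^(m+1)·P(D < k−j) for an integer-valued step variable D with P(−ℓ ≤ D ≤ s) = 1. If P(D ≥ 2) > 0, then for any Λ > 0 there exist values with 0 ≤ f_{j+1} − f_j ≤ Λ for all j such that the partial derivative of G with respect to f_{k−1} is strictly negative; specifically, if f_k = f_{k−1} > f_{k−2} then ∂G/∂f_{k−1} = (m+1)(f_k−f_{k−1})^m P(D≥1) − (m+1)(f_{k−1}−f_{k−2})^m P(D≥2) < 0. -/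

import Mathlib

theorem stmt16 (m : ℕ) (hm : 1 ≤ m) (s ℓ : ℕ)
    (d : ℤ → ℝ) (hd0 : ∀ j, 0 ≤ d j) (hdsum : HasSum d 1)
    (hsupp : ∀ j, d j ≠ 0 → -(ℓ : ℤ) ≤ j ∧ j ≤ (s : ℤ))
    (Pge : ℤ → ℝ) (hPge : ∀ n, Pge n = ∑' j : ℤ, if n ≤ j then d j else 0)
    (Plt : ℤ → ℝ) (hPlt : ∀ n, Plt n = ∑' j : ℤ, if j < n then d j else 0)
    (hD2 : 0 < Pge 2) (k : ℤ)
    (G : (ℤ → ℝ) → ℝ)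
    (hG : ∀ f : ℤ → ℝ, G f =
      f k - ∑ j ∈ Finset.Icc (k - (s : ℤ)) (k - 1), (f (j + 1) - f j) ^ (m + 1) * Pge (k - j)
        + ∑ j ∈ Finset.Icc k (k + (ℓ : ℤ) - 1), (f (j + 1) - f j) ^ (m + 1) * Plt (k - j)) :
    (∀ Λ : ℝ, 0 < Λ → ∃ f : ℤ → ℝ,
      (∀ j : ℤ, 0 ≤ f (j + 1) - f j ∧ f (j + 1) - f j ≤ Λ) ∧
      deriv (fun t => G (Function.update f (k - 1) t)) (f (k - 1)) < 0) ∧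
    (∀ f : ℤ → ℝ, f k = f (k - 1) → f (k - 2) < f (k - 1) →
      deriv (fun t => G (Function.update f (k - 1) t)) (f (k - 1)) =
        ((m : ℝ) + 1) * (f k - f (k - 1)) ^ m * Pge 1
          - ((m : ℝ) + 1) * (f (k - 1) - f (k - 2)) ^ m * Pge 2 ∧
      deriv (fun t => G (Function.update f (k - 1) t)) (f (k - 1)) < 0) := by
  -- First, show that s ≥ 2 (since P(D ≥ 2) > 0 and support is bounded above by s)
  have hs2 : 2 ≤ (s : ℤ) := by
    by_contra h
    have hz : ∀ j : ℤ, (if (2:ℤ) ≤ j then d j else 0) = 0 := by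
      intro j
      split_ifs with hj
      · by_contra hdj
        have := (hsupp j hdj).2
        omega
      · rfl
    rw [hPge 2] at hD2
    simp only [hz, tsum_zero] at hD2
    exact lt_irrefl 0 hD2
  -- Key structural lemma: G ∘ (update at k-1) is an explicit function of t
  have key : ∀ f : ℤ → ℝ, ∃ C : ℝ, ∀ t : ℝ,
      G (Function.update f (k-1) t)
        = C - (f k - t) ^ (m+1) * Pge 1 - (t - f (k-2)) ^ (m+1) * Pge 2 := by
    intro f
    set S := Finset.Icc (k - (s:ℤ)) (k-1) with hS
    have hmem1 : (k-1) ∈ S := by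
      simp only [hS, Finset.mem_Icc]
      omega
    have hmem2 : (k-2) ∈ S.erase (k-1) := by
      simp only [hS, Finset.mem_erase, Finset.mem_Icc]
      omega
    refine ⟨f k
      - ∑ j ∈ (S.erase (k-1)).erase (k-2), (f (j+1) - f j) ^ (m+1) * Pge (k - j)
      + ∑ j ∈ Finset.Icc k (k + (ℓ:ℤ) - 1), (f (j+1) - f j) ^ (m+1) * Plt (k - j), ?_⟩
    intro t
    rw [hG]
    have hk : Function.update f (k-1) t k = f k :=
      Function.update_of_ne (by omega) _ _
    have h2 : ∑ j ∈ Finset.Icc k (k + (ℓ:ℤ) - 1),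
        (Function.update f (k-1) t (j+1) - Function.update f (k-1) t j) ^ (m+1) * Plt (k - j)
        = ∑ j ∈ Finset.Icc k (k + (ℓ:ℤ) - 1), (f (j+1) - f j) ^ (m+1) * Plt (k - j) := by
      refine Finset.sum_congr rfl fun j hj => ?_
      simp only [Finset.mem_Icc] at hj
      rw [Function.update_of_ne (by omega), Function.update_of_ne (by omega)]
    have h1 : ∑ j ∈ S,
        (Function.update f (k-1) t (j+1) - Function.update f (k-1) t j) ^ (m+1) * Pge (k - j)
        = (f k - t) ^ (m+1) * Pge 1 + ((t - f (k-2)) ^ (m+1) * Pge 2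
          + ∑ j ∈ (S.erase (k-1)).erase (k-2), (f (j+1) - f j) ^ (m+1) * Pge (k - j)) := by
      rw [← Finset.add_sum_erase _ _ hmem1, ← Finset.add_sum_erase _ _ hmem2]
      have e1 : Function.update f (k-1) t ((k-1)+1) = f k := by
        rw [show (k-1)+1 = k by ring]
        exact hk
      have e2 : Function.update f (k-1) t (k-1) = t := Function.update_self _ _ _
      have e3 : Function.update f (k-1) t ((k-2)+1) = t := by
        rw [show (k-2)+1 = k-1 by ring]
        exact e2
      have e4 : Function.update f (k-1) t (k-2) = f (k-2) :=
        Function.update_of_ne (by omega) _ _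
      have e5 : k - (k-1) = (1:ℤ) := by ring
      have e6 : k - (k-2) = (2:ℤ) := by ring
      rw [e1, e2, e3, e4, e5, e6]
      congr 1
      congr 1
      refine Finset.sum_congr rfl fun j hj => ?_
      simp only [Finset.mem_erase, hS, Finset.mem_Icc] at hj
      rw [Function.update_of_ne (by omega), Function.update_of_ne (by omega)]
    rw [hk, h1, h2]
    ring
  -- Part 2: the explicit derivative formula and its negativity
  have part2 : ∀ f : ℤ → ℝ, f k = f (k - 1) → f (k - 2) < f (k - 1) →
      deriv (fun t => G (Function.update f (k - 1) t)) (f (k - 1)) =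
        ((m : ℝ) + 1) * (f k - f (k - 1)) ^ m * Pge 1
          - ((m : ℝ) + 1) * (f (k - 1) - f (k - 2)) ^ m * Pge 2 ∧
      deriv (fun t => G (Function.update f (k - 1) t)) (f (k - 1)) < 0 := by
    intro f hfk hf2
    obtain ⟨C, hC⟩ := key f
    have hfun : (fun t => G (Function.update f (k-1) t))
        = fun t => C - (f k - t) ^ (m+1) * Pge 1 - (t - f (k-2)) ^ (m+1) * Pge 2 :=
      funext hC
    set x := f (k-1) with hx
    have h1 : HasDerivAt (fun t : ℝ => f k - t) (-1) x := by
      simpa using (hasDerivAt_id x).const_sub (f k)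
    have h2 : HasDerivAt (fun t : ℝ => t - f (k-2)) 1 x := (hasDerivAt_id x).sub_const _
    have h1p := (h1.pow (m+1)).mul_const (Pge 1)
    have h2p := (h2.pow (m+1)).mul_const (Pge 2)
    have hD := ((hasDerivAt_const x C).sub h1p).sub h2p
    have hderiv : HasDerivAt (fun t => G (Function.update f (k-1) t))
        (((m : ℝ) + 1) * (f k - x) ^ m * Pge 1 - ((m : ℝ) + 1) * (x - f (k-2)) ^ m * Pge 2) x := by
      rw [hfun]
      refine hD.congr_deriv ?_
      simp only [Nat.add_sub_cancel]
      push_cast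
      ring
    have heq : deriv (fun t => G (Function.update f (k-1) t)) x
        = ((m : ℝ) + 1) * (f k - x) ^ m * Pge 1 - ((m : ℝ) + 1) * (x - f (k-2)) ^ m * Pge 2 :=
      hderiv.deriv
    refine ⟨heq, ?_⟩
    rw [heq, hfk, sub_self, zero_pow (by omega : m ≠ 0), mul_zero, zero_mul, zero_sub]
    have hpos : 0 < (x - f (k-2)) ^ m := pow_pos (by linarith) m
    have hm1 : (0:ℝ) < (m : ℝ) + 1 := by positivity
    nlinarith [mul_pos (mul_pos hm1 hpos) hD2]
  refine ⟨?_, part2⟩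
  intro Λ hΛ
  set c : ℝ := min Λ 1 with hc
  have hc0 : 0 < c := lt_min hΛ one_pos
  refine ⟨fun j => if j ≤ k - 2 then 0 else c, fun j => ?_, ?_⟩
  · by_cases hj : j ≤ k - 3
    · simp only [if_pos (by omega : j + 1 ≤ k - 2), if_pos (by omega : j ≤ k - 2)]
      simp [le_of_lt hΛ]
    · by_cases hj2 : j = k - 2
      · subst hj2
        simp only [if_neg (by omega : ¬ (k - 2 + 1 ≤ k - 2)), if_pos (le_refl _)]
        constructor
        · linarith
        · rw [sub_zero]; exact min_le_left Λ 1
      · simp only [if_neg (by omega : ¬ (j + 1 ≤ k - 2)), if_neg (by omega : ¬ (j ≤ k - 2))]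
        simp [le_of_lt hΛ]
  · have h1 : (if k ≤ k - 2 then (0:ℝ) else c) = c := if_neg (by omega)
    have h2 : (if k - 1 ≤ k - 2 then (0:ℝ) else c) = c := if_neg (by omega)
    have h3 : (if k - 2 ≤ k - 2 then (0:ℝ) else c) = 0 := if_pos le_rfl
    exact (part2 _ (by rw [h1, h2]) (by rw [h2, h3]; exact hc0)).2
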